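/- Let a > 0 and E_a(z) = (2/sinh(2πa))^{1/2} sin(π(z+ia))/(z+ia). Then for every real x and every y > 0, (y/π) ∫_ℝ (t² + a²)|E_a(t)|² / ((x−t)² + y²) dt = coth(2πa) − e^{−2πy} cos(2πx) csch(2πa). -/

import Mathlib

open Real Complex MeasureTheory Filter Topology Set intervalIntegral FourierTransform

-- L1: improper integral of complex exponential
lemma cexp_int_Ioi {z : ℂ} (hz : 0 < z.re) :
    ∫ t : ℝ in Ioi (0:ℝ), Complex.exp (-z * t) = 1 / z := by
  have hzne : z ≠ 0 := fun h => by simp [h] at hz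
  have hmeas : Continuous fun t : ℝ => Complex.exp (-z * t) := by fun_prop
  have hint : IntegrableOn (fun t : ℝ => Complex.exp (-z * t)) (Ioi 0) := by
    refine ((exp_neg_integrableOn_Ioi 0 hz).mono' hmeas.aestronglyMeasurable.restrict ?_)
    filter_upwards with t
    simp [Complex.norm_exp, mul_comm]
  have h1 : Tendsto (fun T : ℝ => ∫ t in (0:ℝ)..T, Complex.exp (-z * t)) atTop
      (𝓝 (∫ t : ℝ in Ioi (0:ℝ), Complex.exp (-z * t))) :=
    intervalIntegral_tendsto_integral_Ioi 0 hint tendsto_id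
  have h2 : Tendsto (fun T : ℝ => ∫ t in (0:ℝ)..T, Complex.exp (-z * t)) atTop (𝓝 (1 / z)) := by
    have hform : ∀ T : ℝ, (∫ t in (0:ℝ)..T, Complex.exp (-z * t))
        = (Complex.exp (-z * T) - 1) / (-z) := by
      intro T
      rw [integral_exp_mul_complex (neg_ne_zero.mpr hzne)]
      simp
    simp_rw [hform]
    have : Tendsto (fun T : ℝ => Complex.exp (-z * T)) atTop (𝓝 0) := by
      rw [tendsto_zero_iff_norm_tendsto_zero]
      have : (fun T : ℝ => ‖Complex.exp (-z * T)‖) = fun T : ℝ => Real.exp (-(z.re * T)) := by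
        funext T; simp [Complex.norm_exp]
      rw [this]
      exact Real.tendsto_exp_neg_atTop_nhds_zero.comp
        (Tendsto.const_mul_atTop hz tendsto_id)
    have := (this.sub_const 1).div_const (-z)
    convert this using 2
    field_simp
    ring
  exact tendsto_nhds_unique h1 h2

lemma integrable_exp_neg_abs {b : ℝ} (hb : 0 < b) :
    Integrable (fun t : ℝ => Real.exp (-(b * |t|))) := by
  have hf : IntegrableOn (fun t : ℝ => Real.exp (-(b * |t|))) (Ioi 0) := by
    refine (exp_neg_integrableOn_Ioi 0 hb).congr_fun (fun t ht => ?_) measurableSet_Ioi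
    rw [abs_of_pos ht, ← neg_mul]
  have int_Iic : IntegrableOn (fun t : ℝ => Real.exp (-(b * |t|))) (Iic 0) := by
    rw [← Measure.map_neg_eq_self (volume : Measure ℝ)]
    have m : MeasurableEmbedding fun x : ℝ => -x := (Homeomorph.neg ℝ).measurableEmbedding
    rw [m.integrableOn_map_iff]
    simp_rw [Function.comp_def, abs_neg, neg_preimage, neg_Iic, neg_zero]
    exact (integrableOn_Ici_iff_integrableOn_Ioi).mpr hf
  have := int_Iic.union hf
  rwa [Iic_union_Ioi, integrableOn_univ] at this

lemma integrable_cexp_abs {b c : ℝ} (hb : 0 < b) :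
    Integrable (fun v : ℝ => Complex.exp (↑(-(b * |v|)) - ↑(c * v) * Complex.I)) := by
  refine ((integrable_exp_neg_abs hb).mono' ?_ ?_)
  · apply Continuous.aestronglyMeasurable
    fun_prop
  · filter_upwards with v
    simp [Complex.norm_exp]

lemma fourier_calc {b c : ℝ} (hb : 0 < b) :
    ∫ v : ℝ, Complex.exp (↑(-(b * |v|)) - ↑(c * v) * Complex.I)
      = ((2 * b) / (b ^ 2 + c ^ 2) : ℝ) := by
  have hint := (integrable_cexp_abs (b := b) (c := c) hb)
  have hne1 : (b : ℂ) + c * Complex.I ≠ 0 := by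
    intro h
    have := congrArg Complex.re h
    simp at this
    exact hb.ne' this
  have hne2 : (b : ℂ) - c * Complex.I ≠ 0 := by
    intro h
    have := congrArg Complex.re h
    simp at this
    exact hb.ne' this
  have hIoi : ∫ v : ℝ in Ioi 0, Complex.exp (↑(-(b * |v|)) - ↑(c * v) * Complex.I)
      = 1 / ((b : ℂ) + c * Complex.I) := by
    rw [← cexp_int_Ioi (z := (b : ℂ) + c * Complex.I) (by simpa using hb)]
    refine setIntegral_congr_fun measurableSet_Ioi (fun v hv => ?_)
    rw [abs_of_pos hv]
    congr 1
    push_cast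
    ring
  have hIic : ∫ v : ℝ in Iic 0, Complex.exp (↑(-(b * |v|)) - ↑(c * v) * Complex.I)
      = 1 / ((b : ℂ) - c * Complex.I) := by
    have : ∫ v : ℝ in Iic 0, Complex.exp (↑(-(b * |v|)) - ↑(c * v) * Complex.I)
        = ∫ v : ℝ in Iic 0,
            (fun u : ℝ => Complex.exp (-((b : ℂ) - c * Complex.I) * u)) (-v) := by
      refine setIntegral_congr_fun measurableSet_Iic (fun v hv => ?_)
      rw [abs_of_nonpos hv]
      congr 1
      push_cast
      ring
    rw [this,
      integral_comp_neg_Iic 0 (fun u : ℝ => Complex.exp (-((b : ℂ) - c * Complex.I) * u)),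
      neg_zero, cexp_int_Ioi (by simpa using hb)]
  rw [← integral_Iic_add_Ioi hint.integrableOn hint.integrableOn, hIic, hIoi]
  have hprod : ((b : ℂ) - c * Complex.I) * ((b : ℂ) + c * Complex.I)
      = ((b ^ 2 + c ^ 2 : ℝ) : ℂ) := by
    have : Complex.I * Complex.I = -1 := Complex.I_mul_I
    push_cast
    ring_nf
    rw [Complex.I_sq]
    ring
  rw [div_add_div _ _ hne2 hne1, hprod]
  push_cast
  ring

lemma integrable_inv_sq_add {y : ℝ} (hy : 0 < y) :
    Integrable (fun s : ℝ => (s ^ 2 + y ^ 2)⁻¹) := by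
  have h2 : Integrable (fun s : ℝ => (1 + (s / y) ^ 2)⁻¹) :=
    integrable_inv_one_add_sq.comp_div hy.ne'
  have : (fun s : ℝ => (s ^ 2 + y ^ 2)⁻¹)
      = fun s : ℝ => (y ^ 2)⁻¹ * (1 + (s / y) ^ 2)⁻¹ := by
    funext s
    rw [← mul_inv, eq_comm, inv_eq_iff_eq_inv, inv_inv]
    field_simp
    ring
  rw [this]
  exact h2.const_mul _

lemma integral_inv_sq_add {y : ℝ} (hy : 0 < y) :
    ∫ s : ℝ, (s ^ 2 + y ^ 2)⁻¹ = π / y := by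
  have : (fun s : ℝ => (s ^ 2 + y ^ 2)⁻¹)
      = fun s : ℝ => (y ^ 2)⁻¹ * (1 + (s / y) ^ 2)⁻¹ := by
    funext s
    rw [← mul_inv, eq_comm, inv_eq_iff_eq_inv, inv_inv]
    field_simp
    ring
  rw [this, MeasureTheory.integral_const_mul,
    MeasureTheory.Measure.integral_comp_div (fun s : ℝ => (1 + s ^ 2)⁻¹) y,
    integral_univ_inv_one_add_sq, smul_eq_mul, abs_of_pos hy]
  field_simp

lemma cos_poisson {y : ℝ} (hy : 0 < y) :
    ∫ s : ℝ, Real.cos (2 * π * s) * (s ^ 2 + y ^ 2)⁻¹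
      = π / y * Real.exp (-(2 * π * y)) := by
  set f : ℝ → ℂ := fun t => (Real.exp (-(2 * π * y * |t|)) : ℂ) with hf_def
  have hb : 0 < 2 * π * y := by positivity
  have hπ : (π : ℝ) ≠ 0 := Real.pi_ne_zero
  have hf : Integrable f := (integrable_exp_neg_abs hb).ofReal
  have h𝓕 : 𝓕 f = fun w : ℝ => ((y / π * (w ^ 2 + y ^ 2)⁻¹ : ℝ) : ℂ) := by
    funext w
    rw [Real.fourier_real_eq_integral_exp_smul]
    have heq : ∀ v : ℝ, Complex.exp (↑(-2 * π * v * w) * Complex.I) • f v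
        = Complex.exp (↑(-(2 * π * y * |v|)) - ↑(2 * π * w * v) * Complex.I) := by
      intro v
      rw [smul_eq_mul,
        show f v = Complex.exp (↑(-(2 * π * y * |v|)) : ℂ) by simp [hf_def],
        ← Complex.exp_add]
      congr 1
      push_cast
      ring
    simp_rw [heq]
    rw [fourier_calc hb]
    congr 1
    have h1 : w ^ 2 + y ^ 2 ≠ 0 := by positivity
    field_simp
    ring
  have h𝓕int : Integrable (𝓕 f) := by
    rw [h𝓕]
    exact ((integrable_inv_sq_add hy).const_mul (y / π)).ofReal
  have hcont : Continuous f := by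
    apply Complex.continuous_ofReal.comp
    apply Real.continuous_exp.comp
    fun_prop
  have hinv := hf.fourierInv_fourier_eq h𝓕int (hcont.continuousAt (x := 1))
  rw [Real.fourierInv_eq_fourier_neg,
    Real.fourier_real_eq_integral_exp_smul, h𝓕] at hinv
  have hkercont : Continuous fun w : ℝ => (w ^ 2 + y ^ 2)⁻¹ :=
    ((continuous_pow 2).add continuous_const).inv₀ (fun w => (by positivity : w ^ 2 + y ^ 2 ≠ 0))
  have hint2 : Integrable (fun w : ℝ =>
      Complex.exp (↑(-2 * π * w * (-1 : ℝ)) * Complex.I)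
        • ((y / π * (w ^ 2 + y ^ 2)⁻¹ : ℝ) : ℂ)) := by
    refine ((integrable_inv_sq_add hy).const_mul (y / π)).mono' ?_ ?_
    · apply Continuous.aestronglyMeasurable
      refine Continuous.smul (Complex.continuous_exp.comp ?_)
        (Complex.continuous_ofReal.comp (continuous_const.mul hkercont))
      fun_prop
    · filter_upwards with w
      rw [norm_smul]
      have h1 : ‖Complex.exp (↑(-2 * π * w * (-1 : ℝ)) * Complex.I)‖ = 1 := by
        simp [Complex.norm_exp]
      rw [h1, one_mul, Complex.norm_real, Real.norm_eq_abs,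
        _root_.abs_of_nonneg (by positivity : (0:ℝ) ≤ y / π * (w ^ 2 + y ^ 2)⁻¹)]
  have hre := congrArg (fun z : ℂ => RCLike.re z) hinv
  simp only [] at hre
  rw [← integral_re hint2] at hre
  have hre2 : ∀ w : ℝ, RCLike.re (Complex.exp (↑(-2 * π * w * (-1 : ℝ)) * Complex.I)
        • ((y / π * (w ^ 2 + y ^ 2)⁻¹ : ℝ) : ℂ))
      = y / π * (Real.cos (2 * π * w) * (w ^ 2 + y ^ 2)⁻¹) := by
    intro w
    rw [smul_eq_mul, RCLike.re_to_complex, Complex.mul_re]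
    simp only [Complex.exp_ofReal_mul_I_re, Complex.ofReal_re, Complex.ofReal_im, mul_zero,
      sub_zero]
    rw [show -2 * π * w * (-1 : ℝ) = 2 * π * w by ring]
    ring
  simp_rw [hre2] at hre
  rw [MeasureTheory.integral_const_mul] at hre
  have hfre : RCLike.re (f 1) = Real.exp (-(2 * π * y)) := by
    simp [hf_def, RCLike.re_to_complex, -Complex.ofReal_exp]
  rw [hfre] at hre
  rw [eq_comm, ← hre]
  field_simp

lemma integral_comp_sub (x : ℝ) (h : ℝ → ℝ) :
    ∫ t : ℝ, h (x - t) = ∫ t : ℝ, h t := by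
  have h2 := MeasureTheory.integral_neg_eq_self (μ := volume) (fun t : ℝ => h (x + t))
  simp only [← sub_eq_add_neg] at h2
  rw [h2, MeasureTheory.integral_add_left_eq_self h x]

lemma sin_kernel_zero {y : ℝ} :
    ∫ s : ℝ, Real.sin (2 * π * s) * (s ^ 2 + y ^ 2)⁻¹ = 0 := by
  have h := MeasureTheory.integral_neg_eq_self (μ := volume)
    (fun s : ℝ => Real.sin (2 * π * s) * (s ^ 2 + y ^ 2)⁻¹)
  simp only [mul_neg, Real.sin_neg, neg_mul, neg_sq, MeasureTheory.integral_neg] at h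
  linarith

lemma Ea_pointwise (a : ℝ) (ha : 0 < a) (t : ℝ) :
    (t ^ 2 + a ^ 2) * ‖((Real.sqrt (2 / Real.sinh (2 * π * a)) : ℂ) *
      Complex.sin (π * ((t : ℂ) + a * Complex.I)) / ((t : ℂ) + a * Complex.I))‖ ^ 2
    = (Real.cosh (2 * π * a) - Real.cos (2 * π * t)) / Real.sinh (2 * π * a) := by
  have hπ : (0:ℝ) < π := Real.pi_pos
  have hS : 0 < Real.sinh (2 * π * a) := Real.sinh_pos_iff.mpr (by positivity)
  have hta : (t ^ 2 + a ^ 2) ≠ 0 := by positivity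
  rw [norm_div, norm_mul, div_pow, mul_pow]
  have hw : ‖((t : ℂ) + a * Complex.I)‖ ^ 2 = t ^ 2 + a ^ 2 := by
    rw [Complex.sq_norm, Complex.normSq_add_mul_I]
  have h2 : ‖((Real.sqrt (2 / Real.sinh (2 * π * a)) : ℂ))‖ ^ 2
      = 2 / Real.sinh (2 * π * a) := by
    rw [Complex.norm_real, Real.norm_eq_abs, _root_.abs_of_nonneg (Real.sqrt_nonneg _),
      Real.sq_sqrt (by positivity)]
  have h3 : Complex.sin (π * ((t : ℂ) + a * Complex.I))
      = ↑(Real.sin (π * t) * Real.cosh (π * a))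
        + ↑(Real.cos (π * t) * Real.sinh (π * a)) * Complex.I := by
    have harg : (π : ℂ) * ((t : ℂ) + a * Complex.I)
        = ↑(π * t) + ↑(π * a) * Complex.I := by push_cast; ring
    rw [harg, Complex.sin_add, Complex.cos_mul_I, Complex.sin_mul_I,
      ← Complex.ofReal_sin, ← Complex.ofReal_cos, ← Complex.ofReal_sinh, ← Complex.ofReal_cosh]
    push_cast
    ring
  have h4 : ‖(Complex.sin (π * ((t : ℂ) + a * Complex.I)))‖ ^ 2
      = (Real.sin (π * t) * Real.cosh (π * a)) ^ 2
        + (Real.cos (π * t) * Real.sinh (π * a)) ^ 2 := by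
    rw [h3, Complex.sq_norm, Complex.normSq_add_mul_I]
  rw [h2, h4, hw]
  have hcosh : Real.cosh (2 * π * a) = Real.cosh (π * a) ^ 2 + Real.sinh (π * a) ^ 2 := by
    rw [show 2 * π * a = 2 * (π * a) by ring, Real.cosh_two_mul]
  have hcos2 : Real.cos (2 * π * t) = Real.cos (π * t) ^ 2 - Real.sin (π * t) ^ 2 := by
    rw [show 2 * π * t = 2 * (π * t) by ring, Real.cos_two_mul']
  have key : 2 * ((Real.sin (π * t) * Real.cosh (π * a)) ^ 2
        + (Real.cos (π * t) * Real.sinh (π * a)) ^ 2)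
      = Real.cosh (2 * π * a) - Real.cos (2 * π * t) := by
    rw [hcosh, hcos2]
    nlinarith [Real.sin_sq_add_cos_sq (π * t), Real.cosh_sq_sub_sinh_sq (π * a)]
  rw [← key]
  field_simp

theorem Ea_poisson_integral (a : ℝ) (ha : 0 < a) (x : ℝ) (y : ℝ) (hy : 0 < y) :
    (y / π) * ∫ t : ℝ,
        (t ^ 2 + a ^ 2) *
          ‖((Real.sqrt (2 / Real.sinh (2 * π * a)) : ℂ) *
            Complex.sin (π * ((t : ℂ) + a * Complex.I)) / ((t : ℂ) + a * Complex.I))‖ ^ 2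
          / ((x - t) ^ 2 + y ^ 2)
      = Real.cosh (2 * π * a) / Real.sinh (2 * π * a)
          - Real.exp (-(2 * π * y)) * Real.cos (2 * π * x) * (1 / Real.sinh (2 * π * a)) := by
  have hπ : (0:ℝ) < π := Real.pi_pos
  have hS : 0 < Real.sinh (2 * π * a) := Real.sinh_pos_iff.mpr (by positivity)
  set S := Real.sinh (2 * π * a) with hS_def
  set M := Real.cosh (2 * π * a) with hM_def
  -- kernel integrability (shifted)
  have hker : Integrable (fun t : ℝ => ((x - t) ^ 2 + y ^ 2)⁻¹) := by
    have h := ((integrable_inv_sq_add hy).comp_add_left x).comp_neg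
    simpa [sub_eq_add_neg] using h
  have hkercont : Continuous fun t : ℝ => ((x - t) ^ 2 + y ^ 2)⁻¹ := by
    refine Continuous.inv₀ (by fun_prop) (fun t => by positivity)
  have hcos : Integrable (fun t : ℝ => Real.cos (2 * π * t) * ((x - t) ^ 2 + y ^ 2)⁻¹) := by
    refine hker.mono' (Continuous.aestronglyMeasurable (by fun_prop)) ?_
    filter_upwards with t
    rw [Real.norm_eq_abs, abs_mul, _root_.abs_of_nonneg (by positivity : (0:ℝ) ≤ ((x - t) ^ 2 + y ^ 2)⁻¹)]
    exact mul_le_of_le_one_left (by positivity) (by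
      rw [abs_le]; exact ⟨Real.neg_one_le_cos _, Real.cos_le_one _⟩)
  -- rewrite integrand
  have hfun : (fun t : ℝ =>
      (t ^ 2 + a ^ 2) *
        ‖((Real.sqrt (2 / S) : ℂ) *
          Complex.sin (π * ((t : ℂ) + a * Complex.I)) / ((t : ℂ) + a * Complex.I))‖ ^ 2
        / ((x - t) ^ 2 + y ^ 2))
      = fun t : ℝ => (M / S) * ((x - t) ^ 2 + y ^ 2)⁻¹
          - (1 / S) * (Real.cos (2 * π * t) * ((x - t) ^ 2 + y ^ 2)⁻¹) := by
    funext t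
    rw [div_eq_mul_inv, Ea_pointwise a ha t, ← hS_def, ← hM_def]
    ring
  rw [hfun, integral_sub (hker.const_mul _) (hcos.const_mul _),
    MeasureTheory.integral_const_mul, MeasureTheory.integral_const_mul]
  -- first integral
  have hI1 : ∫ t : ℝ, ((x - t) ^ 2 + y ^ 2)⁻¹ = π / y := by
    rw [integral_comp_sub x (fun s : ℝ => (s ^ 2 + y ^ 2)⁻¹), integral_inv_sq_add hy]
  -- second integral
  have hI2 : ∫ t : ℝ, Real.cos (2 * π * t) * ((x - t) ^ 2 + y ^ 2)⁻¹
      = Real.cos (2 * π * x) * (π / y * Real.exp (-(2 * π * y))) := by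
    have e1 : (fun t : ℝ => Real.cos (2 * π * t) * ((x - t) ^ 2 + y ^ 2)⁻¹)
        = fun t : ℝ => (fun u : ℝ => Real.cos (2 * π * (x - u)) * (u ^ 2 + y ^ 2)⁻¹) (x - t) := by
      funext t
      simp only []
      rw [show x - (x - t) = t by ring]
    rw [e1, integral_comp_sub x (fun u : ℝ => Real.cos (2 * π * (x - u)) * (u ^ 2 + y ^ 2)⁻¹)]
    have e2 : (fun u : ℝ => Real.cos (2 * π * (x - u)) * (u ^ 2 + y ^ 2)⁻¹)
        = fun u : ℝ => Real.cos (2 * π * x) * (Real.cos (2 * π * u) * (u ^ 2 + y ^ 2)⁻¹)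
            + Real.sin (2 * π * x) * (Real.sin (2 * π * u) * (u ^ 2 + y ^ 2)⁻¹) := by
      funext u
      rw [show 2 * π * (x - u) = 2 * π * x - 2 * π * u by ring, Real.cos_sub]
      ring
    have bound : ∀ (g : ℝ → ℝ), (∀ u, |g u| ≤ 1) →
        ∀ u : ℝ, ‖g u * (u ^ 2 + y ^ 2)⁻¹‖ ≤ (u ^ 2 + y ^ 2)⁻¹ := by
      intro g hg u
      rw [Real.norm_eq_abs, abs_mul,
        _root_.abs_of_nonneg (by positivity : (0:ℝ) ≤ (u ^ 2 + y ^ 2)⁻¹)]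
      exact mul_le_of_le_one_left (by positivity) (hg u)
    have hcos0 : Integrable (fun u : ℝ => Real.cos (2 * π * u) * (u ^ 2 + y ^ 2)⁻¹) := by
      refine (integrable_inv_sq_add hy).mono'
        (Continuous.aestronglyMeasurable ?_) ?_
      · exact Real.continuous_cos.comp (by fun_prop) |>.mul
          (((continuous_pow 2).add continuous_const).inv₀ (fun u => (by positivity : u ^ 2 + y ^ 2 ≠ 0)))
      · filter_upwards with u
        exact bound (fun u : ℝ => Real.cos (2 * π * u)) (fun u => by
          rw [abs_le]; exact ⟨Real.neg_one_le_cos _, Real.cos_le_one _⟩) u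
    have hsin0 : Integrable (fun u : ℝ => Real.sin (2 * π * u) * (u ^ 2 + y ^ 2)⁻¹) := by
      refine (integrable_inv_sq_add hy).mono'
        (Continuous.aestronglyMeasurable ?_) ?_
      · exact Real.continuous_sin.comp (by fun_prop) |>.mul
          (((continuous_pow 2).add continuous_const).inv₀ (fun u => (by positivity : u ^ 2 + y ^ 2 ≠ 0)))
      · filter_upwards with u
        exact bound (fun u : ℝ => Real.sin (2 * π * u)) (fun u => by
          rw [abs_le]; exact ⟨Real.neg_one_le_sin _, Real.sin_le_one _⟩) u
    rw [e2, integral_add (hcos0.const_mul _) (hsin0.const_mul _),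
      MeasureTheory.integral_const_mul, MeasureTheory.integral_const_mul,
      cos_poisson hy, sin_kernel_zero, mul_zero, add_zero]
  rw [hI1, hI2]
  field_simp
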